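/- For each a, t ∈ F_q, the map Ψ_{a,t} defined by Ψ_{a,t}([m,b]) = [−m, b + am + t] on lines and Ψ_{a,t}((x,y)) = (−x + a, y + t) on points is an automorphism of the mixed graph G_q. -/

import Mathlib

/-- Incidence in the biaffine plane: the point `(x,y)` (as `Sum.inl`) lies on the
    line `[m,b]` (as `Sum.inr`) iff `y = m*x + b`; these are the undirected edges. -/
def MEdge (F : Type*) [Field F] (u v : (F × F) ⊕ (F × F)) : Prop :=
  ∃ p l : F × F, ((u = Sum.inl p ∧ v = Sum.inr l) ∨ (u = Sum.inr l ∧ v = Sum.inl p)) ∧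
    p.2 = l.1 * p.1 + l.2

/-- The arcs of G_q: `[m,b] → [m,b+i]` for `i ∈ M`, and `(x,y) → (x,y+j)` for `j ∈ -M`. -/
def MArc (F : Type*) [Field F] (M : Finset F) (u v : (F × F) ⊕ (F × F)) : Prop :=
  (∃ m b i : F, i ∈ M ∧ u = Sum.inr (m, b) ∧ v = Sum.inr (m, b + i)) ∨
  (∃ x y j : F, -j ∈ M ∧ u = Sum.inl (x, y) ∧ v = Sum.inl (x, y + j))

/-- The map Ψ_{a,t}: [m,b] ↦ [-m, b + a m + t] on lines, (x,y) ↦ (-x + a, y + t)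
    on points. -/
def psi (F : Type*) [Field F] (a t : F) : (F × F) ⊕ (F × F) → (F × F) ⊕ (F × F)
  | .inl (x, y) => .inl (-x + a, y + t)
  | .inr (m, b) => .inr (-m, b + a * m + t)

lemma psi_psi {F : Type*} [Field F] (a t : F) (u : (F × F) ⊕ (F × F)) :
    psi F a (-t) (psi F a t u) = u := by
  rcases u with ⟨x, y⟩ | ⟨m, b⟩ <;> simp only [psi, Sum.inl.injEq, Sum.inr.injEq,
    Prod.mk.injEq] <;> constructor <;> ring

lemma medge_psi {F : Type*} [Field F] (a t : F) (u v : (F × F) ⊕ (F × F)) :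
    MEdge F u v → MEdge F (psi F a t u) (psi F a t v) := by
  rintro ⟨⟨x, y⟩, ⟨m, b⟩, (⟨rfl, rfl⟩ | ⟨rfl, rfl⟩), h⟩ <;> simp only at h
  · exact ⟨(-x + a, y + t), (-m, b + a * m + t), Or.inl ⟨rfl, rfl⟩, by
      simp only; linear_combination h⟩
  · exact ⟨(-x + a, y + t), (-m, b + a * m + t), Or.inr ⟨rfl, rfl⟩, by
      simp only; linear_combination h⟩

lemma marc_psi {F : Type*} [Field F] (M : Finset F) (a t : F) (u v : (F × F) ⊕ (F × F)) :
    MArc F M u v → MArc F M (psi F a t u) (psi F a t v) := by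
  rintro (⟨m, b, i, hi, rfl, rfl⟩ | ⟨x, y, j, hj, rfl, rfl⟩)
  · refine Or.inl ⟨-m, b + a * m + t, i, hi, rfl, ?_⟩
    simp only [psi, Sum.inr.injEq, Prod.mk.injEq]
    exact ⟨trivial, by ring⟩
  · refine Or.inr ⟨-x + a, y + t, j, hj, rfl, ?_⟩
    simp only [psi, Sum.inl.injEq, Prod.mk.injEq]
    exact ⟨trivial, by ring⟩

/-- Ψ_{a,t} is an automorphism of the mixed graph G_q. -/
theorem psi_automorphism {F : Type*} [Field F] [Fintype F] [DecidableEq F]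
    (q : ℕ) (hq : Fintype.card F = q) (hodd : Odd q) (hpp : IsPrimePow q)
    (M : Finset F) (h0 : (0 : F) ∉ M) (hcard : M.card = (q - 1) / 2)
    (hsum : ∀ u ∈ M, ∀ v ∈ M, u + v ≠ 0) (a t : F) :
    Function.Bijective (psi F a t) ∧
    (∀ u v, MEdge F u v ↔ MEdge F (psi F a t u) (psi F a t v)) ∧
    (∀ u v, MArc F M u v ↔ MArc F M (psi F a t u) (psi F a t v)) := by
  have hinv : ∀ u, psi F a t (psi F a (-t) u) = u := by
    intro u
    have := psi_psi a (-t) u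
    simpa using this
  refine ⟨Function.bijective_iff_has_inverse.mpr ⟨psi F a (-t), psi_psi a t, hinv⟩, ?_, ?_⟩
  · intro u v
    refine ⟨medge_psi a t u v, fun h => ?_⟩
    have := medge_psi a (-t) _ _ h
    rwa [psi_psi, psi_psi] at this
  · intro u v
    refine ⟨marc_psi M a t u v, fun h => ?_⟩
    have := marc_psi M a (-t) _ _ h
    rwa [psi_psi, psi_psi] at this
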